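/- For an order filter 𝒮 on L = Finset M, the order filter Ch(𝒮) on D = M →₀ ℕ is a prime filter if and only if 𝒮 is a prime filter; and in that case both 𝒮 and Ch(𝒮) are maximal filters (on L and D respectively). -/

import Mathlib

/-- An order filter on a lattice `P`: a nonempty subset that is upward closed and
closed under binary meets. -/
def IsOrderFilter {P : Type*} [Lattice P] (F : Set P) : Prop :=
  F.Nonempty ∧ (∀ a ∈ F, ∀ b : P, a ≤ b → b ∈ F) ∧ (∀ a ∈ F, ∀ b ∈ F, a ⊓ b ∈ F)

/-- A prime order filter on a lattice `P`: a proper order filter `F` such that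
`a ⊔ b ∈ F` implies `a ∈ F` or `b ∈ F`. -/
def IsPrimeOrderFilter {P : Type*} [Lattice P] (F : Set P) : Prop :=
  IsOrderFilter F ∧ F ≠ Set.univ ∧ ∀ a b : P, a ⊔ b ∈ F → a ∈ F ∨ b ∈ F

/-- A maximal order filter on a lattice `P`: a proper order filter that is maximal
under inclusion among proper order filters. -/
def IsMaximalOrderFilter {P : Type*} [Lattice P] (F : Set P) : Prop :=
  IsOrderFilter F ∧ F ≠ Set.univ ∧
    ∀ G : Set P, IsOrderFilter G → G ≠ Set.univ → F ⊆ G → G = F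

/-- The characteristic function `ch S : M →₀ ℕ` of a finite set `S`,
with `(ch S) m = 1` if `m ∈ S` and `0` otherwise. -/
noncomputable def chFun {M : Type*} (S : Finset M) : M →₀ ℕ :=
  Finsupp.indicator S (fun _ _ => 1)

/-- `Supp F = {supp f | f ∈ F}`, where `supp f = {m | f m ≠ 0}` is the support of
a finitely supported function `f : M →₀ ℕ`. -/
def SuppFilter {M : Type*} (F : Set (M →₀ ℕ)) : Set (Finset M) :=
  Finsupp.support '' F

/-- `Ch 𝒮 = {f : M →₀ ℕ | ∃ S ∈ 𝒮, ch S ≤ f}`. -/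
noncomputable def ChFilter {M : Type*} (𝒮 : Set (Finset M)) : Set (M →₀ ℕ) :=
  {f : M →₀ ℕ | ∃ S ∈ 𝒮, chFun S ≤ f}

section Aux
variable {M : Type*} [DecidableEq M]

lemma chFun_support (S : Finset M) : (chFun S).support = S := by
  ext m
  simp [chFun, Finsupp.mem_support_iff, Finsupp.indicator_apply]

lemma chFun_le_iff (S : Finset M) (f : M →₀ ℕ) : chFun S ≤ f ↔ S ⊆ f.support := by
  constructor
  · intro h m hm
    have := h m
    rw [chFun, Finsupp.indicator_apply] at this
    simp [hm] at this
    simp [Finsupp.mem_support_iff]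
    omega
  · intro h m
    rw [chFun, Finsupp.indicator_apply]
    split
    · next hm => have := h hm; rw [Finsupp.mem_support_iff] at this; omega
    · exact Nat.zero_le _

lemma mem_chFilter_iff {𝒮 : Set (Finset M)}
    (hup : ∀ a ∈ 𝒮, ∀ b : Finset M, a ≤ b → b ∈ 𝒮) (f : M →₀ ℕ) :
    f ∈ ChFilter 𝒮 ↔ f.support ∈ 𝒮 := by
  constructor
  · rintro ⟨S, hS, hle⟩
    exact hup S hS _ ((chFun_le_iff S f).1 hle)
  · intro h
    exact ⟨f.support, h, (chFun_le_iff _ f).2 (le_refl _)⟩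
end Aux


/-- For an order filter `𝒮` on `L = Finset M`, the order filter `Ch 𝒮` on
`D = M →₀ ℕ` is prime iff `𝒮` is prime; and in that case both `𝒮` and `Ch 𝒮` are
maximal filters. -/
theorem chFilter_isPrime_iff_and_maximal (M : Type*) [DecidableEq M]
    (𝒮 : Set (Finset M)) (h𝒮 : IsOrderFilter 𝒮) :
    (IsPrimeOrderFilter (ChFilter 𝒮) ↔ IsPrimeOrderFilter 𝒮) ∧
    (IsPrimeOrderFilter 𝒮 →
      IsMaximalOrderFilter 𝒮 ∧ IsMaximalOrderFilter (ChFilter 𝒮)) := by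
  obtain ⟨hne, hup, hinf⟩ := h𝒮
  have hmem : ∀ f : M →₀ ℕ, f ∈ ChFilter 𝒮 ↔ f.support ∈ 𝒮 := mem_chFilter_iff hup
  -- properness transfer
  have hproper : ChFilter 𝒮 = Set.univ ↔ 𝒮 = Set.univ := by
    constructor
    · intro h
      have h0 : (0 : M →₀ ℕ) ∈ ChFilter 𝒮 := h ▸ Set.mem_univ _
      rw [hmem] at h0
      simp only [Finsupp.support_zero] at h0
      ext S
      simp only [Set.mem_univ, iff_true]
      exact hup ∅ h0 S (Finset.empty_subset S)
    · intro h
      ext f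
      simp only [Set.mem_univ, iff_true]
      exact (hmem f).2 (h ▸ Set.mem_univ _)
  -- Ch 𝒮 is an order filter
  have hChFilter : IsOrderFilter (ChFilter 𝒮) := by
    refine ⟨?_, ?_, ?_⟩
    · obtain ⟨S, hS⟩ := hne
      exact ⟨chFun S, (hmem _).2 (by rw [chFun_support]; exact hS)⟩
    · intro a ha b hab
      rw [hmem] at ha ⊢
      exact hup _ ha _ (Finsupp.support_mono hab)
    · intro a ha b hb
      rw [hmem] at ha hb ⊢
      rw [Finsupp.support_inf]
      exact hinf _ ha _ hb
  -- prime iff prime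
  have hiff : IsPrimeOrderFilter (ChFilter 𝒮) ↔ IsPrimeOrderFilter 𝒮 := by
    constructor
    · rintro ⟨_, hprop, hprime⟩
      refine ⟨⟨hne, hup, hinf⟩, fun h => hprop (hproper.2 h), ?_⟩
      intro S T hST
      have : chFun S ⊔ chFun T ∈ ChFilter 𝒮 := by
        rw [hmem, Finsupp.support_sup, chFun_support, chFun_support]
        exact hST
      rcases hprime _ _ this with h | h
      · left; rw [hmem, chFun_support] at h; exact h
      · right; rw [hmem, chFun_support] at h; exact h
    · rintro ⟨_, hprop, hprime⟩
      refine ⟨hChFilter, fun h => hprop (hproper.1 h), ?_⟩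
      intro f g hfg
      rw [hmem, Finsupp.support_sup] at hfg
      rcases hprime _ _ hfg with h | h
      · exact Or.inl ((hmem f).2 h)
      · exact Or.inr ((hmem g).2 h)
  refine ⟨hiff, ?_⟩
  rintro ⟨_, hprop, hprime⟩
  have hempty : (∅ : Finset M) ∉ 𝒮 := by
    intro h
    exact hprop (Set.eq_univ_of_forall fun S => hup ∅ h S (Finset.empty_subset S))
  constructor
  · -- 𝒮 maximal
    refine ⟨⟨hne, hup, hinf⟩, hprop, ?_⟩
    intro G ⟨Gne, Gup, Ginf⟩ Gprop hsub
    have Gempty : (∅ : Finset M) ∉ G := by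
      intro h
      exact Gprop (Set.eq_univ_of_forall fun S => Gup ∅ h S (Finset.empty_subset S))
    apply Set.Subset.antisymm _ hsub
    intro T hT
    by_contra hTn
    obtain ⟨S, hS⟩ := hne
    have hsplit : (S \ T) ∪ (S ∩ T) ∈ 𝒮 := by
      have : (S \ T) ∪ (S ∩ T) = S := by
        ext m; simp [Finset.mem_sdiff, Finset.mem_inter]; tauto
      rwa [this]
    rcases hprime _ _ hsplit with h | h
    · have : (S \ T) ⊓ T ∈ G := Ginf _ (hsub h) _ hT
      rw [show (S \ T) ⊓ T = ∅ by ext m; simp [Finset.mem_sdiff]] at this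
      exact Gempty this
    · exact hTn (hup _ h _ Finset.inter_subset_right)
  · -- Ch 𝒮 maximal
    refine ⟨hChFilter, fun h => hprop (hproper.1 h), ?_⟩
    intro G ⟨Gne, Gup, Ginf⟩ Gprop hsub
    have Gzero : (0 : M →₀ ℕ) ∉ G := by
      intro h
      exact Gprop (Set.eq_univ_of_forall fun f => Gup 0 h f (zero_le : (0 : M →₀ ℕ) ≤ f))
    apply Set.Subset.antisymm _ hsub
    intro f hf
    by_contra hfn
    rw [hmem] at hfn
    obtain ⟨S, hS⟩ := hne
    have hsplit : (S \ f.support) ∪ (S ∩ f.support) ∈ 𝒮 := by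
      have : (S \ f.support) ∪ (S ∩ f.support) = S := by
        ext m; simp [Finset.mem_sdiff, Finset.mem_inter]; tauto
      rwa [this]
    rcases hprime _ _ hsplit with h | h
    · have hch : chFun (S \ f.support) ∈ G := hsub ((hmem _).2 (by rwa [chFun_support]))
      have : chFun (S \ f.support) ⊓ f ∈ G := Ginf _ hch _ hf
      have heq : chFun (S \ f.support) ⊓ f = 0 := by
        ext m
        rw [Finsupp.inf_apply]
        rw [chFun, Finsupp.indicator_apply]
        split
        · next hm =>
          rw [Finset.mem_sdiff, Finsupp.mem_support_iff] at hm
          simp only [Finsupp.coe_zero, Pi.zero_apply]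
          omega
        · simp
      rw [heq] at this
      exact Gzero this
    · exact hfn (hup _ h _ Finset.inter_subset_right)
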